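/- arXiv:2003.05364 — 6 statements merged into one kernel-verified Lean document; each statement's English description precedes it below -/
import Mathlib

section
/- A feasible solution x* of the multiobjective fractional problem is efficient if and only if the optimal value of the test program MM(x*) is zero, i.e., there is no feasible y and nonnegative slack vector ψ with (c^i - Z_i(x*) d^i)·y - ψ_i = Z_i(x*) d^i_0 - c^i_0 for all i and Σ_i ψ_i > 0. -/
/-- Efficiency test for multiobjective fractional programs:
`x*` is efficient iff the optimal value of `MM(x*)` is zero, i.e. there is no
feasible `(y, ψ)` with `∑ ψ i > 0`. -/
theorem efficiency_test_MM
    (n k : ℕ) (c d : Fin k → Fin n → ℝ) (c0 d0 : Fin k → ℝ)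
    (D : Set (Fin n → ℤ)) (hDfin : D.Finite) (hDne : D.Nonempty)
    (hden : ∀ x ∈ D, ∀ i : Fin k, 0 < (∑ j, d i j * (x j : ℝ)) + d0 i)
    (Z : Fin k → (Fin n → ℤ) → ℝ)
    (hZ : ∀ i x, Z i x = ((∑ j, c i j * (x j : ℝ)) + c0 i) /
      ((∑ j, d i j * (x j : ℝ)) + d0 i))
    (xstar : Fin n → ℤ) (hx : xstar ∈ D) :
    (¬ ∃ y ∈ D, (∀ i, Z i xstar ≤ Z i y) ∧ ∃ j, Z j xstar < Z j y) ↔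
    ¬ ∃ y ∈ D, ∃ ψ : Fin k → ℝ, (∀ i, 0 ≤ ψ i) ∧
      (∀ i, (∑ j, (c i j - Z i xstar * d i j) * (y j : ℝ)) - ψ i
          = Z i xstar * d0 i - c0 i) ∧
      0 < ∑ i, ψ i := by
  apply not_congr
  constructor
  · rintro ⟨y, hy, hle, j, hj⟩
    refine ⟨y, hy, fun i => ((∑ l, c i l * (y l : ℝ)) + c0 i)
      - Z i xstar * ((∑ l, d i l * (y l : ℝ)) + d0 i), ?_, ?_, ?_⟩
    · intro i
      dsimp only
      have hd := hden y hy i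
      have : Z i xstar ≤ ((∑ l, c i l * (y l : ℝ)) + c0 i)
          / ((∑ l, d i l * (y l : ℝ)) + d0 i) := by rw [← hZ]; exact hle i
      rw [le_div_iff₀ hd] at this
      linarith
    · intro i
      dsimp only
      have : (∑ l, (c i l - Z i xstar * d i l) * (y l : ℝ))
          = (∑ l, c i l * (y l : ℝ)) - Z i xstar * (∑ l, d i l * (y l : ℝ)) := by
        rw [Finset.mul_sum, ← Finset.sum_sub_distrib]
        congr 1; ext l; ring
      rw [this]; ring
    · apply Finset.sum_pos'
      · intro i _
        have hd := hden y hy i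
        have : Z i xstar ≤ ((∑ l, c i l * (y l : ℝ)) + c0 i)
            / ((∑ l, d i l * (y l : ℝ)) + d0 i) := by rw [← hZ]; exact hle i
        rw [le_div_iff₀ hd] at this
        linarith
      · refine ⟨j, Finset.mem_univ j, ?_⟩
        have hd := hden y hy j
        have : Z j xstar < ((∑ l, c j l * (y l : ℝ)) + c0 j)
            / ((∑ l, d j l * (y l : ℝ)) + d0 j) := by rw [← hZ]; exact hj
        rw [lt_div_iff₀ hd] at this
        linarith
  · rintro ⟨y, hy, ψ, hψ0, heq, hsum⟩
    have key : ∀ i, ψ i = ((∑ l, c i l * (y l : ℝ)) + c0 i)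
        - Z i xstar * ((∑ l, d i l * (y l : ℝ)) + d0 i) := by
      intro i
      have h := heq i
      have h2 : (∑ l, (c i l - Z i xstar * d i l) * (y l : ℝ))
          = (∑ l, c i l * (y l : ℝ)) - Z i xstar * (∑ l, d i l * (y l : ℝ)) := by
        rw [Finset.mul_sum, ← Finset.sum_sub_distrib]
        congr 1; ext l; ring
      rw [h2] at h; linarith
    have hle : ∀ i, Z i xstar ≤ Z i y := by
      intro i
      have hd := hden y hy i
      rw [hZ i y, le_div_iff₀ hd]
      have := key i; have := hψ0 i; linarith
    have : ∃ j, 0 < ψ j := by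
      by_contra h
      push_neg at h
      have : (∑ i, ψ i) ≤ 0 := Finset.sum_nonpos (fun i _ => h i)
      linarith
    obtain ⟨j, hj⟩ := this
    refine ⟨y, hy, hle, j, ?_⟩
    have hd := hden y hy j
    rw [hZ j y, lt_div_iff₀ hd]
    have := key j; linarith
end

section
/- If the optimal value of the test program MM(x*) is zero, then every optimal solution (y, ψ) satisfies Z_i(y) = Z_i(x*) for all i = 1,…,k. -/
/-- If the optimal value of the test program `MM(x*)` is zero,
then every optimal solution `(y, ψ)` of `MM(x*)` satisfies `Z_i(y) = Z_i(x*)`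
for all `i`. -/
theorem MM_optimal_value_zero_criteria_equal
    (n k : ℕ) (c d : Fin k → Fin n → ℝ) (c0 d0 : Fin k → ℝ)
    (D : Set (Fin n → ℤ)) (hDfin : D.Finite) (hDne : D.Nonempty)
    (hden : ∀ x ∈ D, ∀ i : Fin k, 0 < (∑ j, d i j * (x j : ℝ)) + d0 i)
    (Z : Fin k → (Fin n → ℤ) → ℝ)
    (hZ : ∀ i x, Z i x = ((∑ j, c i j * (x j : ℝ)) + c0 i) /
      ((∑ j, d i j * (x j : ℝ)) + d0 i))
    (xstar : Fin n → ℤ) (hx : xstar ∈ D)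
    -- the optimal value of MM(x*) is zero:
    (hopt : ∀ y ∈ D, ∀ ψ : Fin k → ℝ, (∀ i, 0 ≤ ψ i) →
      (∀ i, (∑ j, (c i j - Z i xstar * d i j) * (y j : ℝ)) - ψ i
          = Z i xstar * d0 i - c0 i) → ∑ i, ψ i ≤ 0) :
    ∀ y ∈ D, ∀ ψ : Fin k → ℝ, (∀ i, 0 ≤ ψ i) →
      (∀ i, (∑ j, (c i j - Z i xstar * d i j) * (y j : ℝ)) - ψ i
          = Z i xstar * d0 i - c0 i) →
      ∑ i, ψ i = 0 → ∀ i, Z i y = Z i xstar := by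
  intro y hy ψ hψ hcon hsum i
  have hψ0 : ψ i = 0 := by
    have := (Finset.sum_eq_zero_iff_of_nonneg (fun j _ => hψ j)).mp hsum i (Finset.mem_univ i)
    exact this
  have hc := hcon i
  rw [hψ0, sub_zero] at hc
  have hexp : (∑ j, (c i j - Z i xstar * d i j) * (y j : ℝ))
      = (∑ j, c i j * (y j : ℝ)) - Z i xstar * (∑ j, d i j * (y j : ℝ)) := by
    rw [Finset.mul_sum, ← Finset.sum_sub_distrib]
    congr 1; ext j; ring
  rw [hexp] at hc
  have hdy := hden y hy i
  rw [hZ i y]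
  rw [div_eq_iff (ne_of_gt hdy)]
  linarith
end

section
/- Let x* be a point and suppose for every index i ∈ {1,…,k} the 'reduced gradient' quantity λ^i := z²_i(x*)·(z¹_i(x) - z¹_i(x*)) - z¹_i(x*)·(z²_i(x) - z²_i(x*)) satisfies λ^i ≤ 0, with strict inequality for at least one i₀. Then the criterion vector (Z_1(x),…,Z_k(x)) is dominated by (Z_1(x*),…,Z_k(x*)), i.e., Z_i(x) ≤ Z_i(x*) for all i and Z_{i₀}(x) < Z_{i₀}(x*). -/
/-- If for every criterion `i` the reduced-gradient quantity
`λ^i = z²_i(x*)(z¹_i(x) - z¹_i(x*)) - z¹_i(x*)(z²_i(x) - z²_i(x*))` is `≤ 0`,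
with strict inequality for some `i₀`, then the criterion vector of `x` is
dominated by that of `x*`. -/
theorem reduced_gradient_domination
    (n k : ℕ) (c d : Fin k → Fin n → ℝ) (c0 d0 : Fin k → ℝ)
    (z1 z2 : Fin k → (Fin n → ℝ) → ℝ) (Z : Fin k → (Fin n → ℝ) → ℝ)
    (hz1 : ∀ i x, z1 i x = (∑ j, c i j * x j) + c0 i)
    (hz2 : ∀ i x, z2 i x = (∑ j, d i j * x j) + d0 i)
    (hZ : ∀ i x, Z i x = z1 i x / z2 i x)
    (x xstar : Fin n → ℝ)
    (hpos : ∀ i, 0 < z2 i x) (hposs : ∀ i, 0 < z2 i xstar)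
    (i0 : Fin k)
    (hle : ∀ i, z2 i xstar * (z1 i x - z1 i xstar)
      - z1 i xstar * (z2 i x - z2 i xstar) ≤ 0)
    (hlt : z2 i0 xstar * (z1 i0 x - z1 i0 xstar)
      - z1 i0 xstar * (z2 i0 x - z2 i0 xstar) < 0) :
    (∀ i, Z i x ≤ Z i xstar) ∧ Z i0 x < Z i0 xstar := by
  constructor
  · intro i
    rw [hZ, hZ, div_le_div_iff₀ (hpos i) (hposs i)]
    nlinarith [hle i]
  · rw [hZ, hZ, div_lt_div_iff₀ (hpos i0) (hposs i0)]
    nlinarith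
end

section
/- Suppose x* maximizes f₁ over a set X_l, and for a point x ∈ X_l the quantity γ² := Q²(x*)(P²(x) - P²(x*)) - P²(x*)(Q²(x) - Q²(x*)) satisfies γ² ≤ 0. Then f₂(x) ≤ f₂(x*) and f₁(x) ≤ f₁(x*), so x* weakly dominates x with respect to the biobjective problem (f₁, f₂). -/
/-- If `x*` maximizes `f₁` over `X_l` and for `x ∈ X_l` the
reduced-gradient quantity `γ² = Q²(x*)(P²(x)-P²(x*)) - P²(x*)(Q²(x)-Q²(x*))`
is `≤ 0`, then `f₂(x) ≤ f₂(x*)` and `f₁(x) ≤ f₁(x*)`, i.e. `x*` weakly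
dominates `x` for `(f₁, f₂)`. -/
theorem biobjective_weak_domination
    (n : ℕ) (p1 p2 q1 q2 : Fin n → ℝ) (α1 α2 β1 β2 : ℝ)
    (P1 P2 Q1 Q2 f1 f2 : (Fin n → ℝ) → ℝ)
    (hP1 : ∀ x, P1 x = (∑ j, p1 j * x j) + α1)
    (hP2 : ∀ x, P2 x = (∑ j, p2 j * x j) + α2)
    (hQ1 : ∀ x, Q1 x = (∑ j, q1 j * x j) + β1)
    (hQ2 : ∀ x, Q2 x = (∑ j, q2 j * x j) + β2)
    (hf1 : ∀ x, f1 x = P1 x / Q1 x) (hf2 : ∀ x, f2 x = P2 x / Q2 x)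
    (Xl : Set (Fin n → ℝ))
    (hposQ1 : ∀ x ∈ Xl, 0 < Q1 x) (hposQ2 : ∀ x ∈ Xl, 0 < Q2 x)
    (xstar : Fin n → ℝ) (hxs : xstar ∈ Xl)
    (hmax : ∀ x ∈ Xl, f1 x ≤ f1 xstar)
    (x : Fin n → ℝ) (hx : x ∈ Xl)
    (hγ : Q2 xstar * (P2 x - P2 xstar) - P2 xstar * (Q2 x - Q2 xstar) ≤ 0) :
    f2 x ≤ f2 xstar ∧ f1 x ≤ f1 xstar := by
  refine ⟨?_, hmax x hx⟩
  rw [hf2 x, hf2 xstar]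
  rw [div_le_div_iff₀ (hposQ2 x hx) (hposQ2 xstar hxs)]
  nlinarith [hγ]
end

section
/- For a linear fractional function f(x) = (p·x + α)/(q·x + β) with q·x + β > 0 on a convex set X, if x* ∈ X and for every direction d with x* + td ∈ X for small t > 0 one has (q·x* + β)(p·d) - (p·x* + α)(q·d) ≤ 0, then x* is a global maximizer of f over X. -/
/-- If at `x* ∈ X` (X convex, positive denominator) the reduced
gradient of the linear fractional function `f` is nonpositive in every feasible
direction, then `x*` is a global maximizer of `f` over `X`. -/
theorem reduced_gradient_nonpos_implies_max
    (n : ℕ) (p q : Fin n → ℝ) (α β : ℝ)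
    (X : Set (Fin n → ℝ)) (hconv : Convex ℝ X)
    (hden : ∀ x ∈ X, 0 < (∑ j, q j * x j) + β)
    (f : (Fin n → ℝ) → ℝ)
    (hf : ∀ x, f x = ((∑ j, p j * x j) + α) / ((∑ j, q j * x j) + β))
    (xstar : Fin n → ℝ) (hxs : xstar ∈ X)
    (hgrad : ∀ dvec : Fin n → ℝ,
      (∃ ε > 0, ∀ t : ℝ, 0 < t → t ≤ ε → xstar + t • dvec ∈ X) →
      ((∑ j, q j * xstar j) + β) * (∑ j, p j * dvec j)
        - ((∑ j, p j * xstar j) + α) * (∑ j, q j * dvec j) ≤ 0) :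
    ∀ x ∈ X, f x ≤ f xstar := by
  intro x hx
  have hfeas : ∃ ε > 0, ∀ t : ℝ, 0 < t → t ≤ ε → xstar + t • (x - xstar) ∈ X := by
    refine ⟨1, one_pos, fun t ht ht1 => ?_⟩
    have := hconv hxs hx (a := 1 - t) (b := t) (by linarith) ht.le (by ring)
    convert this using 1
    funext j
    simp [Pi.add_apply, Pi.smul_apply, Pi.sub_apply]
    ring
  have h := hgrad (x - xstar) hfeas
  have hp : (∑ j, p j * (x - xstar) j) = (∑ j, p j * x j) - (∑ j, p j * xstar j) := by
    rw [← Finset.sum_sub_distrib]; congr 1; funext j; simp [mul_sub]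
  have hq : (∑ j, q j * (x - xstar) j) = (∑ j, q j * x j) - (∑ j, q j * xstar j) := by
    rw [← Finset.sum_sub_distrib]; congr 1; funext j; simp [mul_sub]
  rw [hp, hq] at h
  rw [hf, hf]
  rw [div_le_div_iff₀ (hden x hx) (hden xstar hxs)]
  nlinarith [hden x hx, hden xstar hxs]
end

section
/- The Charnes–Cooper transformation t = 1/(q·x + β), y = t·x maps the linear fractional program max (p·x + α)/(q·x + β) over {x : Ax ≤ b, x ≥ 0} with q·x + β > 0 bijectively onto the linear program max p·y + α·t subject to Ay - b·t ≤ 0, q·y + β·t = 1, y ≥ 0, t > 0, and the optimal values coincide. -/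
/-- The Charnes–Cooper transformation `t = 1/(q·x+β)`, `y = t·x`
maps the feasible region of the linear fractional program bijectively onto the
feasible region of the associated linear program, the objective values
correspond pointwise, and the optimal values coincide. -/
theorem charnes_cooper_transformation
    (m n : ℕ) (A : Matrix (Fin m) (Fin n) ℝ) (b : Fin m → ℝ)
    (p q : Fin n → ℝ) (α β : ℝ)
    (Sx : Set (Fin n → ℝ))
    (hSx : Sx = {x | A.mulVec x ≤ b ∧ 0 ≤ x})
    (hSxne : Sx.Nonempty)
    (hden : ∀ x ∈ Sx, 0 < (∑ j, q j * x j) + β)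
    (f : (Fin n → ℝ) → ℝ)
    (hf : ∀ x, f x = ((∑ j, p j * x j) + α) / ((∑ j, q j * x j) + β))
    (Sy : Set ((Fin n → ℝ) × ℝ))
    (hSy : Sy = {yt | A.mulVec yt.1 - yt.2 • b ≤ 0 ∧
      (∑ j, q j * yt.1 j) + β * yt.2 = 1 ∧ 0 ≤ yt.1 ∧ 0 < yt.2})
    (g : (Fin n → ℝ) × ℝ → ℝ)
    (hg : ∀ yt, g yt = (∑ j, p j * yt.1 j) + α * yt.2)
    (Φ : (Fin n → ℝ) → (Fin n → ℝ) × ℝ)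
    (hΦ : ∀ x, Φ x = ((((∑ j, q j * x j) + β)⁻¹) • x,
      ((∑ j, q j * x j) + β)⁻¹)) :
    Set.BijOn Φ Sx Sy ∧ (∀ x ∈ Sx, g (Φ x) = f x) ∧
    sSup (f '' Sx) = sSup (g '' Sy) := by
  subst hSx hSy
  -- maps to
  have hmaps : Set.MapsTo Φ {x | A.mulVec x ≤ b ∧ 0 ≤ x}
      {yt | A.mulVec yt.1 - yt.2 • b ≤ 0 ∧
        (∑ j, q j * yt.1 j) + β * yt.2 = 1 ∧ 0 ≤ yt.1 ∧ 0 < yt.2} := by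
    intro x hx
    obtain ⟨hAx, hx0⟩ := hx
    have hs : 0 < (∑ j, q j * x j) + β := hden x ⟨hAx, hx0⟩
    set s := (∑ j, q j * x j) + β with hsdef
    have ht : 0 < s⁻¹ := inv_pos.mpr hs
    rw [hΦ]
    refine ⟨?_, ?_, ?_, ht⟩
    · intro i
      have : A.mulVec (s⁻¹ • x) i = s⁻¹ * A.mulVec x i := by
        simp [Matrix.mulVec_smul]
      rw [Pi.sub_apply, this, Pi.smul_apply, smul_eq_mul, Pi.zero_apply]
      have := hAx i
      nlinarith
    · have : (∑ j, q j * (s⁻¹ • x) j) = s⁻¹ * ∑ j, q j * x j := by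
        rw [Finset.mul_sum]; congr 1; ext j; simp [mul_comm, mul_assoc, mul_left_comm]
      rw [← hsdef]
      simp only [this]
      field_simp
      exact hsdef.symm
    · intro j
      simp only [Pi.smul_apply, Pi.zero_apply, smul_eq_mul]
      exact mul_nonneg ht.le (hx0 j)
  have hinj : Set.InjOn Φ {x | A.mulVec x ≤ b ∧ 0 ≤ x} := by
    intro x₁ h₁ x₂ h₂ heq
    have hs₁ : 0 < (∑ j, q j * x₁ j) + β := hden x₁ h₁
    rw [hΦ, hΦ] at heq
    have ht : ((∑ j, q j * x₁ j) + β)⁻¹ = ((∑ j, q j * x₂ j) + β)⁻¹ :=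
      congrArg Prod.snd heq
    have hy : ((∑ j, q j * x₁ j) + β)⁻¹ • x₁ = ((∑ j, q j * x₂ j) + β)⁻¹ • x₂ :=
      congrArg Prod.fst heq
    rw [← ht] at hy
    have hne : ((∑ j, q j * x₁ j) + β)⁻¹ ≠ 0 := (inv_pos.mpr hs₁).ne'
    exact smul_right_injective _ hne hy
  have hsurj : Set.SurjOn Φ {x | A.mulVec x ≤ b ∧ 0 ≤ x}
      {yt | A.mulVec yt.1 - yt.2 • b ≤ 0 ∧
        (∑ j, q j * yt.1 j) + β * yt.2 = 1 ∧ 0 ≤ yt.1 ∧ 0 < yt.2} := by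
    rintro ⟨y, t⟩ ⟨hA, hq, hy0, ht⟩
    refine ⟨t⁻¹ • y, ⟨?_, ?_⟩, ?_⟩
    · intro i
      have h := hA i
      rw [Pi.sub_apply, Pi.smul_apply, Pi.zero_apply, smul_eq_mul] at h
      have : A.mulVec (t⁻¹ • y) i = t⁻¹ * A.mulVec y i := by
        simp [Matrix.mulVec_smul]
      rw [this]
      have hti : 0 < t⁻¹ := inv_pos.mpr ht
      have := mul_le_mul_of_nonneg_left (by linarith : A.mulVec y i ≤ t * b i) hti.le
      rw [← mul_assoc, inv_mul_cancel₀ ht.ne', one_mul] at this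
      exact this
    · intro j
      simp only [Pi.smul_apply, Pi.zero_apply, smul_eq_mul]
      exact mul_nonneg (inv_pos.mpr ht).le (hy0 j)
    · have hsum : (∑ j, q j * (t⁻¹ • y) j) = t⁻¹ * ∑ j, q j * y j := by
        rw [Finset.mul_sum]; congr 1; ext j; simp [mul_comm, mul_assoc, mul_left_comm]
      have hs : (∑ j, q j * (t⁻¹ • y) j) + β = t⁻¹ := by
        rw [hsum]
        field_simp
        linarith [hq]
      rw [hΦ, hs, inv_inv, smul_smul, mul_inv_cancel₀ ht.ne', one_smul]
  have hcorr : ∀ x ∈ {x | A.mulVec x ≤ b ∧ 0 ≤ x}, g (Φ x) = f x := by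
    intro x hx
    have hs : 0 < (∑ j, q j * x j) + β := hden x hx
    rw [hΦ, hg, hf]
    simp only [Pi.smul_apply, smul_eq_mul]
    have : (∑ j, p j * (((∑ j, q j * x j) + β)⁻¹ * x j))
        = ((∑ j, q j * x j) + β)⁻¹ * ∑ j, p j * x j := by
      rw [Finset.mul_sum]; congr 1; ext j; ring
    rw [this]
    field_simp
  have hbij : Set.BijOn Φ {x | A.mulVec x ≤ b ∧ 0 ≤ x}
      {yt | A.mulVec yt.1 - yt.2 • b ≤ 0 ∧
        (∑ j, q j * yt.1 j) + β * yt.2 = 1 ∧ 0 ≤ yt.1 ∧ 0 < yt.2} :=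
    ⟨hmaps, hinj, hsurj⟩
  refine ⟨hbij, hcorr, ?_⟩
  have himg : g '' (Φ '' {x | A.mulVec x ≤ b ∧ 0 ≤ x})
      = f '' {x | A.mulVec x ≤ b ∧ 0 ≤ x} := by
    rw [← Set.image_comp]
    exact Set.image_congr hcorr
  rw [← hbij.image_eq, himg]
end
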